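/- In the frontdoor ADMG on {C, X, N} with directed edges C→X and X→N and bidirected edge C↔N, the interventional distribution P(n | do(c)) is identifiable from the observational distribution and equals ∑_x P(x | c) ∑_{c'} P(n | x, c') P(c'), for any strictly positive SCM inducing this graph. -/

import Mathlib

open Classical

noncomputable section

/-- An acyclic directed mixed graph (ADMG): directed edges (causal) and
bidirected edges (latent confounders). -/
structure ADMG (V : Type) where
  dir : V → V → Prop
  bidir : V → V → Prop
  bidir_symm : ∀ a b, bidir a b → bidir b a
  acyclic : ∀ v, ¬ Relation.TransGen dir v v

namespace ADMG

variable {V : Type} [Fintype V] [DecidableEq V]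

/-- Observed parents of a set `W`, outside `W`. -/
def parents (G : ADMG V) (W : Set V) : Set V :=
  {v | v ∉ W ∧ ∃ w ∈ W, G.dir v w}

/-- Observed parents of a finite set `W`, outside `W`. -/
def parentsF (G : ADMG V) (W : Finset V) : Finset V :=
  Finset.univ.filter fun v => v ∉ W ∧ ∃ w ∈ W, G.dir v w

/-- Ancestors of a set `W` (including `W` itself). -/
def ancestors (G : ADMG V) (W : Set V) : Set V :=
  {v | ∃ w ∈ W, Relation.ReflTransGen G.dir v w}

/-- Ancestors of a finite set `W` (including `W` itself). -/
def ancestorsF (G : ADMG V) (W : Finset V) : Finset V :=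
  Finset.univ.filter fun v => ∃ w ∈ W, Relation.ReflTransGen G.dir v w

/-- Bidirected connectivity (paths of bidirected edges). -/
def biConn (G : ADMG V) (a b : V) : Prop :=
  Relation.ReflTransGen G.bidir a b

/-- `C` is a c-component of `G`: a maximal bidirected-connected set. -/
def isCComponent (G : ADMG V) (C : Set V) : Prop :=
  C.Nonempty ∧ (∀ a ∈ C, ∀ b ∈ C, G.biConn a b) ∧
    ∀ a ∈ C, ∀ b, G.biConn a b → b ∈ C

/-- The set of c-components of `G`. -/
def cComponents (G : ADMG V) : Set (Set V) := {C | G.isCComponent C}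

/-- The graph after `do(I)`: incoming directed edges into `I` and bidirected
edges incident to `I` are removed. -/
def doGraph (G : ADMG V) (I : Set V) : ADMG V where
  dir a b := G.dir a b ∧ b ∉ I
  bidir a b := G.bidir a b ∧ a ∉ I ∧ b ∉ I
  bidir_symm := fun a b h => ⟨G.bidir_symm a b h.1, h.2.2, h.2.1⟩
  acyclic := fun v h => G.acyclic v (Relation.TransGen.mono (p := G.dir) (fun _ _ hx => hx.1) _ _ h)

/-- The graph with all outgoing directed edges of `X` removed. -/
def underGraph (G : ADMG V) (X : Set V) : ADMG V where
  dir a b := G.dir a b ∧ a ∉ X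
  bidir := G.bidir
  bidir_symm := G.bidir_symm
  acyclic := fun v h => G.acyclic v (Relation.TransGen.mono (p := G.dir) (fun _ _ hx => hx.1) _ _ h)

/-- The induced sub-graph on a vertex set `S`. -/
def induced (G : ADMG V) (S : Set V) : ADMG V where
  dir a b := G.dir a b ∧ a ∈ S ∧ b ∈ S
  bidir a b := G.bidir a b ∧ a ∈ S ∧ b ∈ S
  bidir_symm := fun a b h => ⟨G.bidir_symm a b h.1, h.2.2, h.2.1⟩
  acyclic := fun v h => G.acyclic v (Relation.TransGen.mono (p := G.dir) (fun _ _ hx => hx.1) _ _ h)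

/-- Adjacency in the mixed graph. -/
def adjacent (G : ADMG V) (a b : V) : Prop := G.dir a b ∨ G.dir b a ∨ G.bidir a b

/-- The edge between `a` and `b` points into `b`. -/
def intoEdge (G : ADMG V) (a b : V) : Prop := G.dir a b ∨ G.bidir a b

/-- `b` is a collider on the consecutive triple `a, b, c`. -/
def isCollider (G : ADMG V) (a b c : V) : Prop := G.intoEdge a b ∧ G.intoEdge c b

/-- A walk (list of vertices) that is active given the conditioning set `Z`:
non-colliders avoid `Z`, colliders have a descendant in `Z`. -/
def ActiveWalk (G : ADMG V) (Z : Set V) (p : List V) : Prop :=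
  p.Chain' G.adjacent ∧
    ∀ i a b c, p[i]? = some a → p[i + 1]? = some b → p[i + 2]? = some c →
      (G.isCollider a b c → ∃ z ∈ Z, Relation.ReflTransGen G.dir b z) ∧
      (¬ G.isCollider a b c → b ∉ Z)

/-- d-connection of `X` and `Y` given `Z` in the mixed graph (m-connection). -/
def dConnected (G : ADMG V) (X Y Z : Set V) : Prop :=
  ∃ p : List V, G.ActiveWalk Z p ∧
    (∃ x ∈ X, p.head? = some x) ∧ ∃ y ∈ Y, p.getLast? = some y

/-- d-separation of `X` and `Y` given `Z`. -/
def dSeparated (G : ADMG V) (X Y Z : Set V) : Prop := ¬ G.dConnected X Y Z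

end ADMG

/-- A (semi-Markovian) structural causal model over the ADMG `G`, with observed
variables valued in `Val`: independent finite latents `L`, mechanisms `f`
reading only observed parents and own latents (shared latents forcing a
bidirected edge), and the solution map of the structural equations under an
intervention. -/
structure SCM (V : Type) (Val : Type) [Fintype V] [DecidableEq V] [Fintype Val]
    (G : ADMG V) where
  L : Type
  [fintL : Fintype L]
  [decL : DecidableEq L]
  NVal : Type
  [fintN : Fintype NVal]
  ν : L → NVal → ℝ
  ν_nonneg : ∀ l x, 0 ≤ ν l x
  ν_sum : ∀ l, ∑ x, ν l x = 1
  reads : V → L → Prop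
  semiMarkov : ∀ v w l, v ≠ w → reads v l → reads w l → G.bidir v w
  f : V → (V → Val) → (L → NVal) → Val
  f_parents : ∀ v x y ω, (∀ p, G.dir p v → x p = y p) → f v x ω = f v y ω
  f_latents : ∀ v x ω ω', (∀ l, reads v l → ω l = ω' l) → f v x ω = f v x ω'
  solve : Finset V → (V → Val) → (L → NVal) → V → Val
  solve_spec : ∀ I x ω v,
    solve I x ω v = if v ∈ I then x v else f v (solve I x ω) ω

namespace SCM

attribute [instance] SCM.fintL SCM.decL SCM.fintN

variable {V Val : Type} [Fintype V] [DecidableEq V] [Fintype Val] {G : ADMG V}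

/-- Probability of a full latent configuration (latents are independent). -/
def μ (M : SCM V Val G) (ω : M.L → M.NVal) : ℝ := ∏ l, M.ν l (ω l)

/-- The interventional distribution `P(y | do(I := x))` (observational for `I = ∅`). -/
def P (M : SCM V Val G) (I : Finset V) (x : V → Val) (y : V → Val) : ℝ :=
  ∑ ω : M.L → M.NVal, if M.solve I x ω = y then M.μ ω else 0

/-- The marginal interventional distribution `P(S = y|_S | do(I := x))`. -/
def Pm (M : SCM V Val G) (I : Finset V) (x : V → Val) (S : Finset V) (y : V → Val) : ℝ :=
  ∑ z : V → Val, if ∀ v ∈ S, z v = y v then M.P I x z else 0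

/-- The conditional distribution `P(S = y|_S | C = y|_C, do(I := x))`. -/
def cond (M : SCM V Val G) (I : Finset V) (x : V → Val) (S C : Finset V)
    (y : V → Val) : ℝ :=
  M.Pm I x (S ∪ C) y / M.Pm I x C y

/-- Strict positivity of the induced observational distribution. -/
def positive (M : SCM V Val G) : Prop := ∀ x y, 0 < M.P ∅ x y

end SCM

end


/-- The frontdoor ADMG on `{C = 0, X = 1, N = 2}` with directed edges `C → X`,
`X → N` and bidirected edge `C ↔ N`. -/
def Gfd : ADMG (Fin 3) where
  dir a b := (a = 0 ∧ b = 1) ∨ (a = 1 ∧ b = 2)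
  bidir a b := (a = 0 ∧ b = 2) ∨ (a = 2 ∧ b = 0)
  bidir_symm := by decide
  acyclic := by
    intro v h
    have h2 : Relation.TransGen
        (fun a b : Fin 3 => (![0, 1, 2] : Fin 3 → ℕ) a < ![0, 1, 2] b) v v :=
      Relation.TransGen.mono (r := fun a b : Fin 3 => (a = 0 ∧ b = 1) ∨ (a = 1 ∧ b = 2))
        (fun a b hab => by revert a b hab; decide) _ _ h
    have htr : Transitive
        (fun a b : Fin 3 => (![0, 1, 2] : Fin 3 → ℕ) a < ![0, 1, 2] b) :=
      fun _ _ _ hab hbc => lt_trans hab hbc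
    rw [@Relation.transGen_eq_self _ _ ⟨htr⟩] at h2
    exact lt_irrefl _ h2

namespace SCM

variable {Val : Type} [Fintype Val]

/-- Mechanism of vertex 0 with a dummy parent assignment. -/
noncomputable def g0 (M : SCM (Fin 3) Val Gfd) (d : Val) (ω : M.L → M.NVal) : Val :=
  M.f 0 (fun _ => d) ω

/-- Mechanism of vertex 1 as a function of its parent 0. -/
noncomputable def g1 (M : SCM (Fin 3) Val Gfd) (c : Val) (ω : M.L → M.NVal) : Val :=
  M.f 1 (fun _ => c) ω

/-- Mechanism of vertex 2 as a function of its parent 1. -/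
noncomputable def g2 (M : SCM (Fin 3) Val Gfd) (x : Val) (ω : M.L → M.NVal) : Val :=
  M.f 2 (fun _ => x) ω

lemma not_dir_to_0 (p : Fin 3) : ¬ Gfd.dir p 0 := by
  rintro (⟨-, h⟩ | ⟨-, h⟩) <;> simp at h

lemma dir_to_1 (p : Fin 3) (h : Gfd.dir p 1) : p = 0 := by
  rcases h with ⟨h1, -⟩ | ⟨-, h2⟩
  · exact h1
  · simp at h2

lemma dir_to_2 (p : Fin 3) (h : Gfd.dir p 2) : p = 1 := by
  rcases h with ⟨-, h1⟩ | ⟨h2, -⟩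
  · simp at h1
  · exact h2

variable (M : SCM (Fin 3) Val Gfd)

lemma g0_eq (d d' : Val) (ω : M.L → M.NVal) : M.g0 d ω = M.g0 d' ω :=
  M.f_parents 0 _ _ ω fun p hp => absurd hp (not_dir_to_0 p)

lemma solve0 (d : Val) (x : Fin 3 → Val) (ω : M.L → M.NVal) :
    M.solve ∅ x ω 0 = M.g0 d ω := by
  rw [M.solve_spec]
  simp only [Finset.notMem_empty, if_false]
  exact M.f_parents 0 _ _ ω fun p hp => absurd hp (not_dir_to_0 p)

lemma solve1 (d : Val) (x : Fin 3 → Val) (ω : M.L → M.NVal) :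
    M.solve ∅ x ω 1 = M.g1 (M.g0 d ω) ω := by
  rw [M.solve_spec]
  simp only [Finset.notMem_empty, if_false]
  exact M.f_parents 1 _ _ ω fun p hp => by rw [dir_to_1 p hp, M.solve0 d]

lemma solve2 (d : Val) (x : Fin 3 → Val) (ω : M.L → M.NVal) :
    M.solve ∅ x ω 2 = M.g2 (M.g1 (M.g0 d ω) ω) ω := by
  rw [M.solve_spec]
  simp only [Finset.notMem_empty, if_false]
  exact M.f_parents 2 _ _ ω fun p hp => by rw [dir_to_2 p hp, M.solve1 d]

lemma dsolve0 (x : Fin 3 → Val) (ω : M.L → M.NVal) :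
    M.solve {0} x ω 0 = x 0 := by
  rw [M.solve_spec]; simp

lemma dsolve1 (x : Fin 3 → Val) (ω : M.L → M.NVal) :
    M.solve {0} x ω 1 = M.g1 (x 0) ω := by
  rw [M.solve_spec]
  simp only [Finset.mem_singleton, if_neg (by decide : ¬ (1 : Fin 3) = 0)]
  exact M.f_parents 1 _ _ ω fun p hp => by rw [dir_to_1 p hp, M.dsolve0]

lemma dsolve2 (x : Fin 3 → Val) (ω : M.L → M.NVal) :
    M.solve {0} x ω 2 = M.g2 (M.g1 (x 0) ω) ω := by
  rw [M.solve_spec]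
  simp only [Finset.mem_singleton, if_neg (by decide : ¬ (2 : Fin 3) = 0)]
  exact M.f_parents 2 _ _ ω fun p hp => by rw [dir_to_2 p hp, M.dsolve1]

lemma reads_disj0 (l : M.L) (h0 : M.reads 0 l) (h1 : M.reads 1 l) : False := by
  have hb := M.semiMarkov 0 1 l (by decide) h0 h1
  rcases hb with ⟨-, h⟩ | ⟨h, -⟩ <;> simp at h

lemma reads_disj2 (l : M.L) (h0 : M.reads 2 l) (h1 : M.reads 1 l) : False := by
  have hb := M.semiMarkov 2 1 l (by decide) h0 h1
  rcases hb with ⟨h, -⟩ | ⟨-, h⟩ <;> simp at h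

lemma g0_dep (d : Val) (ω ω' : M.L → M.NVal)
    (h : ∀ l, ¬ M.reads 1 l → ω l = ω' l) : M.g0 d ω = M.g0 d ω' :=
  M.f_latents 0 _ ω ω' fun l hl => h l fun h1 => M.reads_disj0 l hl h1

lemma g2_dep (x : Val) (ω ω' : M.L → M.NVal)
    (h : ∀ l, ¬ M.reads 1 l → ω l = ω' l) : M.g2 x ω = M.g2 x ω' :=
  M.f_latents 2 _ ω ω' fun l hl => h l fun h1 => M.reads_disj2 l hl h1

lemma g1_dep (c : Val) (ω ω' : M.L → M.NVal)
    (h : ∀ l, M.reads 1 l → ω l = ω' l) : M.g1 c ω = M.g1 c ω' :=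
  M.f_latents 1 _ ω ω' fun l hl => h l hl

lemma μ_nonneg (ω : M.L → M.NVal) : 0 ≤ M.μ ω :=
  Finset.prod_nonneg fun l _ => M.ν_nonneg l (ω l)

lemma P_nonneg (I : Finset (Fin 3)) (x y : Fin 3 → Val) : 0 ≤ M.P I x y :=
  Finset.sum_nonneg fun ω _ => by
    by_cases h : M.solve I x ω = y <;> simp [h, M.μ_nonneg]

lemma nval_nonempty (l : M.L) : Nonempty M.NVal := by
  by_contra h
  haveI : IsEmpty M.NVal := not_nonempty_iff.mp h
  have := M.ν_sum l
  simp [Finset.univ_eq_empty] at this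

lemma Pm_eq (I : Finset (Fin 3)) (x y : Fin 3 → Val) (S : Finset (Fin 3)) :
    M.Pm I x S y = ∑ ω, if ∀ v ∈ S, M.solve I x ω v = y v then M.μ ω else 0 := by
  unfold SCM.Pm SCM.P
  trans ∑ z : Fin 3 → Val, ∑ ω, if (∀ v ∈ S, z v = y v) ∧ M.solve I x ω = z then M.μ ω else 0
  · refine Finset.sum_congr rfl fun z _ => ?_
    split_ifs with h
    · exact Finset.sum_congr rfl fun ω _ =>
        if_congr ⟨fun hc => ⟨h, hc⟩, And.right⟩ rfl rfl
    · rw [Finset.sum_eq_zero]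
      intro ω _
      exact if_neg fun hc => h hc.1
  rw [Finset.sum_comm]
  refine Finset.sum_congr rfl fun ω _ => ?_
  rw [Finset.sum_eq_single (M.solve I x ω)]
  · by_cases h : ∀ v ∈ S, M.solve I x ω v = y v
    · rw [if_pos ⟨h, rfl⟩, if_pos h]
    · rw [if_neg fun hc => h hc.1, if_neg h]
  · intro z _ hz
    rw [if_neg]
    rintro ⟨-, h⟩
    exact hz h.symm
  · intro h
    exact absurd (Finset.mem_univ _) h



lemma split (F1 F2 : (M.L → M.NVal) → ℝ)
    (h1 : ∀ ω ω', (∀ l, ¬ M.reads 1 l → ω l = ω' l) → F1 ω = F1 ω')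
    (h2 : ∀ ω ω', (∀ l, M.reads 1 l → ω l = ω' l) → F2 ω = F2 ω') :
    ∑ ω, M.μ ω * (F1 ω * F2 ω) =
      (∑ ω, M.μ ω * F1 ω) * (∑ ω, M.μ ω * F2 ω) := by
  classical
  set p : M.L → Prop := fun l => M.reads 1 l with hp
  let e := (Equiv.piEquivPiSubtypeProd p (fun _ => M.NVal)).symm
  let a0 : {l // p l} → M.NVal := fun l => Classical.choice (M.nval_nonempty l.1)
  let b0 : {l // ¬ p l} → M.NVal := fun l => Classical.choice (M.nval_nonempty l.1)
  have he : ∀ (a : {l // p l} → M.NVal) (b : {l // ¬ p l} → M.NVal) (l : M.L),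
      e (a, b) l = if h : p l then a ⟨l, h⟩ else b ⟨l, h⟩ := fun a b l =>
    Equiv.piEquivPiSubtypeProd_symm_apply p (fun _ => M.NVal) (a, b) l
  let μ1 : ({l // p l} → M.NVal) → ℝ := fun a => ∏ l, M.ν l.1 (a l)
  let μ2 : ({l // ¬ p l} → M.NVal) → ℝ := fun b => ∏ l, M.ν l.1 (b l)
  have hμ : ∀ a b, M.μ (e (a, b)) = μ1 a * μ2 b := by
    intro a b
    rw [SCM.μ, ← Fintype.prod_subtype_mul_prod_subtype p (fun l => M.ν l (e (a, b) l))]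
    congr 1
    · exact Finset.prod_congr rfl fun l _ => by rw [he, dif_pos l.2]
    · exact Finset.prod_congr rfl fun l _ => by rw [he, dif_neg l.2]
  have hF1 : ∀ a b, F1 (e (a, b)) = F1 (e (a0, b)) := fun a b =>
    h1 _ _ fun l hl => by rw [he, he, dif_neg hl, dif_neg hl]
  have hF2 : ∀ a b, F2 (e (a, b)) = F2 (e (a, b0)) := fun a b =>
    h2 _ _ fun l hl => by rw [he, he, dif_pos hl, dif_pos hl]
  have hsum : ∀ G : (M.L → M.NVal) → ℝ, ∑ ω, G ω = ∑ a, ∑ b, G (e (a, b)) := by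
    intro G
    rw [← Equiv.sum_comp e G, Fintype.sum_prod_type]
  have hone1 : ∑ a : {l // p l} → M.NVal, μ1 a = 1 := by
    rw [← Fintype.prod_sum (fun (l : {l // p l}) (x : M.NVal) => M.ν l.1 x)]
    simp [M.ν_sum]
  have hone2 : ∑ b : {l // ¬ p l} → M.NVal, μ2 b = 1 := by
    rw [← Fintype.prod_sum (fun (l : {l // ¬ p l}) (x : M.NVal) => M.ν l.1 x)]
    simp [M.ν_sum]
  rw [hsum (fun ω => M.μ ω * (F1 ω * F2 ω)), hsum (fun ω => M.μ ω * F1 ω),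
    hsum (fun ω => M.μ ω * F2 ω)]
  have e1 : ∀ a b, M.μ (e (a, b)) * (F1 (e (a, b)) * F2 (e (a, b))) =
      (μ1 a * F2 (e (a, b0))) * (μ2 b * F1 (e (a0, b))) := by
    intro a b; rw [hμ, hF1 a b, hF2 a b]; ring
  have e2 : ∀ a b, M.μ (e (a, b)) * F1 (e (a, b)) =
      μ1 a * (μ2 b * F1 (e (a0, b))) := by
    intro a b; rw [hμ, hF1 a b]; ring
  have e3 : ∀ a b, M.μ (e (a, b)) * F2 (e (a, b)) =
      (μ1 a * F2 (e (a, b0))) * μ2 b := by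
    intro a b; rw [hμ, hF2 a b]; ring
  calc ∑ a, ∑ b, M.μ (e (a, b)) * (F1 (e (a, b)) * F2 (e (a, b)))
      = (∑ a, μ1 a * F2 (e (a, b0))) * (∑ b, μ2 b * F1 (e (a0, b))) := by
        rw [Finset.sum_mul_sum]
        exact Finset.sum_congr rfl fun a _ => Finset.sum_congr rfl fun b _ => e1 a b
    _ = ((∑ a, ∑ b, M.μ (e (a, b)) * F1 (e (a, b)))) *
          ((∑ a, ∑ b, M.μ (e (a, b)) * F2 (e (a, b)))) := by
        have f1 : (∑ a, ∑ b, M.μ (e (a, b)) * F1 (e (a, b)))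
            = ∑ b, μ2 b * F1 (e (a0, b)) := by
          have step : ∑ a, ∑ b, M.μ (e (a, b)) * F1 (e (a, b))
              = (∑ a, μ1 a) * ∑ b, μ2 b * F1 (e (a0, b)) := by
            rw [Finset.sum_mul_sum]
            exact Finset.sum_congr rfl fun a _ => Finset.sum_congr rfl fun b _ => e2 a b
          rw [step, hone1, one_mul]
        have f2 : (∑ a, ∑ b, M.μ (e (a, b)) * F2 (e (a, b)))
            = ∑ a, μ1 a * F2 (e (a, b0)) := by
          have : ∑ a, ∑ b, M.μ (e (a, b)) * F2 (e (a, b))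
              = (∑ a, μ1 a * F2 (e (a, b0))) * ∑ b, μ2 b := by
            rw [Finset.sum_mul_sum]
            exact Finset.sum_congr rfl fun a _ => Finset.sum_congr rfl fun b _ => e3 a b
          rw [this, hone2, mul_one]
        rw [f1, f2, mul_comm]

/-- `P(C = c')` as a latent-variable sum. -/
noncomputable def q0 (d c' : Val) : ℝ :=
  ∑ ω, M.μ ω * (if M.g0 d ω = c' then (1 : ℝ) else 0)

/-- `P(X = x | C = c)`-numerator as a latent-variable sum. -/
noncomputable def q1 (c x : Val) : ℝ :=
  ∑ ω, M.μ ω * (if M.g1 c ω = x then (1 : ℝ) else 0)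

noncomputable def s2 (x n : Val) : ℝ :=
  ∑ ω, M.μ ω * (if M.g2 x ω = n then (1 : ℝ) else 0)

noncomputable def r2 (d c' x n : Val) : ℝ :=
  ∑ ω, M.μ ω * ((if M.g0 d ω = c' then (1 : ℝ) else 0) *
    (if M.g2 x ω = n then (1 : ℝ) else 0))

lemma PmA (d : Val) (x y : Fin 3 → Val) :
    M.Pm ∅ x ({0} : Finset (Fin 3)) y = M.q0 d (y 0) := by
  rw [M.Pm_eq]
  refine Finset.sum_congr rfl fun ω _ => ?_
  by_cases h0 : M.g0 d ω = y 0 <;>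
    simp [Finset.mem_singleton, M.solve0 d x, h0]

lemma PmB (d : Val) (x y : Fin 3 → Val) :
    M.Pm ∅ x ({1} ∪ {0} : Finset (Fin 3)) y = M.q0 d (y 0) * M.q1 (y 0) (y 1) := by
  rw [M.Pm_eq]
  trans ∑ ω, M.μ ω * ((if M.g0 d ω = y 0 then (1 : ℝ) else 0) *
      (if M.g1 (y 0) ω = y 1 then (1 : ℝ) else 0))
  · refine Finset.sum_congr rfl fun ω _ => ?_
    by_cases h0 : M.g0 d ω = y 0 <;> by_cases h1 : M.g1 (y 0) ω = y 1 <;>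
      simp [Finset.forall_mem_union, M.solve0 d x, M.solve1 d x, h0, h1]
  · exact M.split _ _ (fun ω ω' h => by rw [M.g0_dep d ω ω' h])
      (fun ω ω' h => by rw [M.g1_dep (y 0) ω ω' h])

lemma PmB' (d : Val) (x y : Fin 3 → Val) :
    M.Pm ∅ x ({0, 1} : Finset (Fin 3)) y = M.q0 d (y 0) * M.q1 (y 0) (y 1) := by
  rw [show ({0, 1} : Finset (Fin 3)) = {1} ∪ {0} by decide]
  exact M.PmB d x y

lemma PmC (d : Val) (x y : Fin 3 → Val) :
    M.Pm ∅ x ({2} ∪ {0, 1} : Finset (Fin 3)) y =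
      M.r2 d (y 0) (y 1) (y 2) * M.q1 (y 0) (y 1) := by
  rw [M.Pm_eq]
  trans ∑ ω, M.μ ω * (((if M.g0 d ω = y 0 then (1 : ℝ) else 0) *
      (if M.g2 (y 1) ω = y 2 then (1 : ℝ) else 0)) *
      (if M.g1 (y 0) ω = y 1 then (1 : ℝ) else 0))
  · refine Finset.sum_congr rfl fun ω _ => ?_
    by_cases h0 : M.g0 d ω = y 0 <;> by_cases h1 : M.g1 (y 0) ω = y 1 <;>
      by_cases h2 : M.g2 (y 1) ω = y 2 <;>
      simp [Finset.forall_mem_union, Finset.forall_mem_insert, M.solve0 d x,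
        M.solve1 d x, M.solve2 d x, h0, h1, h2]
  · exact M.split _ _
      (fun ω ω' h => by rw [M.g0_dep d ω ω' h, M.g2_dep (y 1) ω ω' h])
      (fun ω ω' h => by rw [M.g1_dep (y 0) ω ω' h])

lemma PmDo (x y : Fin 3 → Val) :
    M.Pm ({0} : Finset (Fin 3)) x ({2} : Finset (Fin 3)) y =
      ∑ xv, M.q1 (x 0) xv * M.s2 xv (y 2) := by
  rw [M.Pm_eq]
  trans ∑ ω, ∑ xv, M.μ ω * ((if M.g2 xv ω = y 2 then (1 : ℝ) else 0) *
      (if M.g1 (x 0) ω = xv then (1 : ℝ) else 0))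
  · refine Finset.sum_congr rfl fun ω _ => ?_
    rw [Finset.sum_eq_single (M.g1 (x 0) ω)]
    · by_cases h : M.g2 (M.g1 (x 0) ω) ω = y 2 <;>
        simp [Finset.mem_singleton, M.dsolve2 x, h]
    · intro xv _ hxv
      simp [Ne.symm hxv]
    · intro h
      exact absurd (Finset.mem_univ _) h
  · rw [Finset.sum_comm]
    refine Finset.sum_congr rfl fun xv _ => ?_
    rw [M.split _ _ (fun ω ω' h => by rw [M.g2_dep xv ω ω' h])
      (fun ω ω' h => by rw [M.g1_dep (x 0) ω ω' h])]
    exact mul_comm _ _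

lemma sum_r2 (d x n : Val) : ∑ c', M.r2 d c' x n = M.s2 x n := by
  unfold r2 s2
  rw [Finset.sum_comm]
  refine Finset.sum_congr rfl fun ω _ => ?_
  rw [Finset.sum_eq_single (M.g0 d ω)]
  · by_cases h : M.g2 x ω = n <;> simp [h]
  · intro c' _ hc'
    simp [Ne.symm hc']
  · intro h
    exact absurd (Finset.mem_univ _) h

lemma q0_nonneg (d c' : Val) : 0 ≤ M.q0 d c' :=
  Finset.sum_nonneg fun ω _ => mul_nonneg (M.μ_nonneg ω) (by positivity)

lemma q1_nonneg (c x : Val) : 0 ≤ M.q1 c x :=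
  Finset.sum_nonneg fun ω _ => mul_nonneg (M.μ_nonneg ω) (by positivity)

lemma q_pos (hpos : M.positive) (d c' x : Val) :
    0 < M.q0 d c' ∧ 0 < M.q1 c' x := by
  have hP : 0 < M.Pm ∅ (fun _ => c') ({0, 1} : Finset (Fin 3)) ![c', x, x] := by
    have hle : M.P ∅ (fun _ => c') ![c', x, x] ≤
        M.Pm ∅ (fun _ => c') ({0, 1} : Finset (Fin 3)) ![c', x, x] := by
      unfold SCM.Pm
      have := Finset.single_le_sum
        (f := fun z : Fin 3 → Val =>
          if ∀ v ∈ ({0, 1} : Finset (Fin 3)), z v = (![c', x, x]) v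
          then M.P ∅ (fun _ => c') z else 0)
        (fun z _ => by
          beta_reduce
          split
          · exact M.P_nonneg _ _ _
          · exact le_refl 0)
        (Finset.mem_univ (![c', x, x] : Fin 3 → Val))
      simpa using this
    exact lt_of_lt_of_le (hpos _ _) hle
  rw [M.PmB' d] at hP
  rcases mul_pos_iff.mp hP with ⟨h1, h2⟩ | ⟨h1, h2⟩
  · exact ⟨by simpa using h1, by simpa using h2⟩
  · exact absurd h1 (not_lt.mpr (M.q0_nonneg d _))


end SCM
/-- the frontdoor adjustment formula: in `Gfd`, for any strictly
positive SCM, `P(n | do(c)) = ∑ₓ P(x | c) ∑_{c'} P(n | x, c') P(c')`. -/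
theorem frontdoor_adjustment
    {Val : Type} [Fintype Val]
    (M : SCM (Fin 3) Val Gfd) (hpos : M.positive) (cv nv : Val) :
    M.Pm ({0} : Finset (Fin 3)) (fun _ => cv) ({2} : Finset (Fin 3)) (fun _ => nv) =
      ∑ xv : Val,
        M.cond ∅ (fun _ => cv) ({1} : Finset (Fin 3)) ({0} : Finset (Fin 3)) ![cv, xv, nv] *
          ∑ cv' : Val,
            M.cond ∅ (fun _ => cv) ({2} : Finset (Fin 3)) ({0, 1} : Finset (Fin 3))
                ![cv', xv, nv] *
              M.Pm ∅ (fun _ => cv) ({0} : Finset (Fin 3)) ![cv', xv, nv] := by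

  have hq : ∀ c' x : Val, 0 < M.q0 cv c' ∧ 0 < M.q1 c' x := M.q_pos hpos cv
  rw [M.PmDo]
  refine Finset.sum_congr rfl fun xv _ => ?_
  have inner : ∑ cv' : Val,
      M.cond ∅ (fun _ => cv) ({2} : Finset (Fin 3)) ({0, 1} : Finset (Fin 3))
          ![cv', xv, nv] *
        M.Pm ∅ (fun _ => cv) ({0} : Finset (Fin 3)) ![cv', xv, nv]
      = M.s2 xv nv := by
    rw [← M.sum_r2 cv xv nv]
    refine Finset.sum_congr rfl fun c' _ => ?_
    unfold SCM.cond
    rw [M.PmC cv, M.PmB' cv, M.PmA cv]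
    simp only [Matrix.cons_val_zero, Matrix.cons_val_one, Matrix.head_cons,
      Matrix.cons_val_two, Matrix.tail_cons]
    rw [mul_div_mul_right _ _ (ne_of_gt (hq c' xv).2),
      div_mul_cancel₀ _ (ne_of_gt (hq c' xv).1)]
  rw [inner]
  unfold SCM.cond
  rw [M.PmB cv, M.PmA cv]
  simp only [Matrix.cons_val_zero, Matrix.cons_val_one, Matrix.head_cons]
  rw [mul_div_cancel_left₀ _ (ne_of_gt (hq cv xv).1)]
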